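/- arXiv:2303.11613 — 5 statements merged into one kernel-verified Lean document; each statement's English description precedes it below -/
import Mathlib

section
/- For an odd prime p and a self-dual code C ⊆ F_p^n, the vector χ = √p·(1,1,…,1) is a characteristic vector of the Construction A lattice Λ(C); that is, λ·λ ≡ χ·λ mod 2 for all λ ∈ Λ(C). -/
open scoped BigOperators

/-- Construction A lattice of a code `C ⊆ 𝔽_p^n`. -/
noncomputable def constructionA (p n : ℕ) (C : Set (Fin n → ZMod p)) : Set (Fin n → ℝ) :=
  {x | ∃ v : Fin n → ℤ, (∀ i, x i = (v i : ℝ) / Real.sqrt p) ∧ (fun i => ((v i : ZMod p))) ∈ C}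

/-- Dual code `C^⊥`. -/
def dualCode (p n : ℕ) (C : Set (Fin n → ZMod p)) : Set (Fin n → ZMod p) :=
  {c' | ∀ c ∈ C, ∑ i, c i * c' i = 0}

/-- A characteristic vector `χ` of a lattice `L`: `χ ∈ L` and
`λ·λ ≡ χ·λ (mod 2)` for all `λ ∈ L`. -/
def IsCharacteristic (n : ℕ) (L : Set (Fin n → ℝ)) (χ : Fin n → ℝ) : Prop :=
  χ ∈ L ∧ ∀ l ∈ L, ∃ k : ℤ, (∑ i, l i * l i) - (∑ i, χ i * l i) = 2 * (k : ℝ)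

/-- For an odd prime `p` and a self-dual code `C ⊆ 𝔽_p^n`, the vector
`χ = √p·(1,…,1)` is a characteristic vector of the Construction A lattice `Λ(C)`. -/
theorem sqrt_p_ones_isCharacteristic (p n : ℕ) (hp : p.Prime) (hp2 : p ≠ 2)
    (C : Submodule (ZMod p) (Fin n → ZMod p))
    (hsd : (C : Set (Fin n → ZMod p)) = dualCode p n (C : Set (Fin n → ZMod p))) :
    IsCharacteristic n (constructionA p n (C : Set (Fin n → ZMod p)))
      (fun _ => Real.sqrt p) := by
  have hppos : (0 : ℝ) < p := by exact_mod_cast hp.pos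
  have hsq : Real.sqrt p * Real.sqrt p = p := Real.mul_self_sqrt (le_of_lt hppos)
  have hs : Real.sqrt p ≠ 0 := by
    intro h; rw [h, mul_zero] at hsq; exact (ne_of_gt hppos) hsq.symm
  have hodd : p % 2 = 1 := Nat.odd_iff.mp (hp.odd_of_ne_two hp2)
  constructor
  · refine ⟨fun _ => (p : ℤ), fun i => ?_, ?_⟩
    · rw [eq_div_iff hs]
      push_cast
      exact hsq
    · have : (fun _ : Fin n => ((p : ℤ) : ZMod p)) = 0 := by
        funext i; push_cast; simp
      rw [this]
      exact C.zero_mem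
  · rintro l ⟨v, hv, hvC⟩
    -- self-orthogonality: p divides ∑ v i ^ 2
    have hself : ∑ i, ((v i : ZMod p)) * ((v i : ZMod p)) = 0 := by
      have := hsd ▸ hvC
      exact this _ hvC
    have hdvd : (p : ℤ) ∣ ∑ i, v i * v i := by
      have : ((∑ i, v i * v i : ℤ) : ZMod p) = 0 := by push_cast; exact hself
      exact_mod_cast (ZMod.intCast_zmod_eq_zero_iff_dvd _ p).mp this
    obtain ⟨t, ht⟩ := hdvd
    -- parity: t - ∑ v i is even
    have hpar : (2 : ℤ) ∣ t - ∑ i, v i := by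
      have h2 : ((t - ∑ i, v i : ℤ) : ZMod 2) = 0 := by
        have hp1 : ((p : ℕ) : ZMod 2) = 1 := by
          rw [← ZMod.natCast_mod p 2, hodd]; rfl
        have hx : ∀ x : ZMod 2, x * x = x := by decide
        have hc := congrArg (Int.cast : ℤ → ZMod 2) ht
        push_cast at hc
        rw [hp1, one_mul] at hc
        push_cast
        rw [← hc]
        rw [sub_eq_zero]
        exact Finset.sum_congr rfl fun i _ => hx _
      exact (ZMod.intCast_zmod_eq_zero_iff_dvd _ 2).mp h2
    obtain ⟨k, hk⟩ := hpar
    refine ⟨k, ?_⟩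
    have h1 : ∑ i, l i * l i = (∑ i, (v i : ℝ) * v i) / p := by
      rw [Finset.sum_div]
      apply Finset.sum_congr rfl
      intro i _
      rw [hv i]
      field_simp
      rw [Real.sq_sqrt (le_of_lt hppos)]
    have h2 : ∑ i, (fun _ : Fin n => Real.sqrt p) i * l i = ∑ i, (v i : ℝ) := by
      apply Finset.sum_congr rfl
      intro i _
      rw [hv i]
      field_simp
    rw [h1, h2]
    have ht' : (∑ i, (v i : ℝ) * v i) = p * t := by exact_mod_cast congrArg (Int.cast : ℤ → ℝ) ht
    rw [ht', mul_div_cancel_left₀ _ (ne_of_gt hppos)]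
    have := congrArg (Int.cast : ℤ → ℝ) hk
    push_cast at this
    linarith
end

section
/- Let C ⊆ F_2^n be a singly-even self-dual code and s ∈ S(C). Then χ = √2·s ∈ ℝ^n is a characteristic vector of the Construction A lattice Λ(C): for all λ ∈ Λ(C), λ·λ ≡ χ·λ mod 2. -/
open scoped BigOperators

/-- Hamming weight of a codeword. -/
def hammingWt {p n : ℕ} (c : Fin n → ZMod p) : ℕ :=
  (Finset.univ.filter fun i => c i ≠ 0).card

/-- The doubly-even part `C₀` of a binary code. -/
def doublyEvenPart (n : ℕ) (C : Set (Fin n → ZMod 2)) : Set (Fin n → ZMod 2) :=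
  {c | c ∈ C ∧ hammingWt c % 4 = 0}

/-- The shadow `S(C) = C₀^⊥ \ C` of a binary code `C`. -/
def shadowCode (n : ℕ) (C : Set (Fin n → ZMod 2)) : Set (Fin n → ZMod 2) :=
  dualCode 2 n (doublyEvenPart n C) \ C

lemma wt_eq_sum_val {n : ℕ} (c : Fin n → ZMod 2) :
    (hammingWt c : ℤ) = ∑ i, ((c i).val : ℤ) := by
  unfold hammingWt
  rw [Finset.card_filter, Nat.cast_sum]
  refine Finset.sum_congr rfl fun i _ => ?_
  rcases (by decide : ∀ x : ZMod 2, x = 0 ∨ x = 1) (c i) with h | h <;> rw [h] <;> decide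

lemma val_add_int : ∀ x y : ZMod 2,
    (((x + y).val : ℤ)) = (x.val : ℤ) + (y.val : ℤ) - 2 * ((x.val : ℤ) * (y.val : ℤ)) := by
  decide

lemma cast_val_zmod2 : ∀ x : ZMod 2, ((x.val : ZMod 2)) = x := by decide

lemma mul_self_zmod2 : ∀ x : ZMod 2, x * x = x := by decide

lemma val_mul_self_zmod2 : ∀ x : ZMod 2, (x.val : ℤ) * (x.val : ℤ) = (x.val : ℤ) := by decide

lemma sq_mod_four (x : ℤ) : (4 : ℤ) ∣ x ^ 2 - x % 2 := by
  rcases Int.emod_two_eq x with h2 | h2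
  · obtain ⟨q, hq⟩ : ∃ q, x = 2 * q := ⟨x / 2, by omega⟩
    subst hq
    rw [h2]
    exact ⟨q ^ 2, by ring⟩
  · obtain ⟨q, hq⟩ : ∃ q, x = 2 * q + 1 := ⟨x / 2, by omega⟩
    subst hq
    rw [h2]
    exact ⟨q ^ 2 + q, by ring⟩

lemma dot_val_cast {n : ℕ} (a b : Fin n → ZMod 2) :
    ((∑ i, ((a i).val : ℤ) * ((b i).val : ℤ) : ℤ) : ZMod 2) = ∑ i, a i * b i := by
  push_cast
  simp [cast_val_zmod2]

lemma dot_val_parity {n : ℕ} (a b : Fin n → ZMod 2) (h : ∑ i, a i * b i = 0) :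
    (2 : ℤ) ∣ ∑ i, ((a i).val : ℤ) * ((b i).val : ℤ) := by
  have := (ZMod.intCast_zmod_eq_zero_iff_dvd
    (∑ i, ((a i).val : ℤ) * ((b i).val : ℤ)) 2).mp (by rw [dot_val_cast, h])
  exact_mod_cast this

lemma dot_val_parity' {n : ℕ} (a b : Fin n → ZMod 2)
    (h : (2 : ℤ) ∣ ∑ i, ((a i).val : ℤ) * ((b i).val : ℤ)) :
    ∑ i, a i * b i = 0 := by
  rw [← dot_val_cast]
  rw [ZMod.intCast_zmod_eq_zero_iff_dvd]
  exact_mod_cast h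

lemma wt_even {n : ℕ} (a : Fin n → ZMod 2) (h : ∑ i, a i * a i = 0) :
    (hammingWt a : ℤ) % 2 = 0 := by
  have h2 := dot_val_parity a a h
  simp only [val_mul_self_zmod2] at h2
  rw [wt_eq_sum_val]
  omega

lemma wt_add_doubly_even {n : ℕ} (a b : Fin n → ZMod 2) (h : ∑ i, a i * b i = 0)
    (ha : hammingWt a % 4 = 2) (hb : hammingWt b % 4 = 2) :
    hammingWt (a + b) % 4 = 0 := by
  have hI := dot_val_parity a b h
  have hWab : (hammingWt (a + b) : ℤ)
      = (hammingWt a : ℤ) + (hammingWt b : ℤ)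
        - 2 * ∑ i, ((a i).val : ℤ) * ((b i).val : ℤ) := by
    rw [wt_eq_sum_val, wt_eq_sum_val, wt_eq_sum_val, Finset.mul_sum]
    rw [← Finset.sum_add_distrib, ← Finset.sum_sub_distrib]
    exact Finset.sum_congr rfl fun i _ => val_add_int (a i) (b i)
  omega

/-- For a singly-even self-dual binary code `C` and `s ∈ S(C)`, the vector `χ = √2·s`
is a characteristic vector of the Construction A lattice `Λ(C)`:
for all `λ ∈ Λ(C)`, `λ·λ ≡ χ·λ (mod 2)`. -/
theorem sqrt_two_shadow_characteristic (n : ℕ) (C : Submodule (ZMod 2) (Fin n → ZMod 2))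
    (hsd : (C : Set (Fin n → ZMod 2)) = dualCode 2 n (C : Set (Fin n → ZMod 2)))
    (hse : ∃ c ∈ C, hammingWt c % 4 = 2)
    (s : Fin n → ZMod 2) (hs : s ∈ shadowCode n (C : Set (Fin n → ZMod 2))) :
    ∀ l ∈ constructionA 2 n (C : Set (Fin n → ZMod 2)),
      ∃ k : ℤ, (∑ i, l i * l i) - (∑ i, (Real.sqrt 2 * ((s i).val : ℝ)) * l i)
        = 2 * (k : ℝ) := by
  obtain ⟨hsdual, hsnot⟩ := hs
  -- any codeword is orthogonal to any codeword
  have horth : ∀ a ∈ (C : Set (Fin n → ZMod 2)), ∀ b ∈ (C : Set (Fin n → ZMod 2)),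
      ∑ i, a i * b i = 0 := by
    intro a ha b hb
    have hb' : b ∈ dualCode 2 n (C : Set (Fin n → ZMod 2)) := hsd ▸ hb
    exact hb' a ha
  -- every codeword has even weight
  have heven : ∀ a ∈ (C : Set (Fin n → ZMod 2)), (hammingWt a : ℤ) % 2 = 0 := by
    intro a ha
    exact wt_even a (horth a ha a ha)
  intro l hl
  obtain ⟨v, hv, hvc⟩ := hl
  simp only [Nat.cast_ofNat] at hv
  set c : Fin n → ZMod 2 := fun i => ((v i : ZMod 2)) with hcdef
  have hcC : c ∈ (C : Set (Fin n → ZMod 2)) := hvc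
  have key : (4 : ℤ) ∣ ((∑ i, (v i) ^ 2) - 2 * ∑ i, ((s i).val : ℤ) * v i) := by
    set W : ℤ := ∑ i, ((c i).val : ℤ) with hWdef
    set P : ℤ := ∑ i, ((s i).val : ℤ) * ((c i).val : ℤ) with hPdef
    have hW : (hammingWt c : ℤ) = W := wt_eq_sum_val c
    have h1 : (4 : ℤ) ∣ (∑ i, (v i) ^ 2) - W := by
      rw [hWdef, ← Finset.sum_sub_distrib]
      apply Finset.dvd_sum
      intro i _
      have hval : ((c i).val : ℤ) = v i % 2 := ZMod.val_intCast _
      rw [hval]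
      exact sq_mod_four (v i)
    have h2 : (2 : ℤ) ∣ (∑ i, ((s i).val : ℤ) * v i) - P := by
      rw [hPdef, ← Finset.sum_sub_distrib]
      apply Finset.dvd_sum
      intro i _
      have hval : ((c i).val : ℤ) = v i % 2 := ZMod.val_intCast _
      have hd : (2 : ℤ) ∣ v i - ((c i).val : ℤ) := by rw [hval]; omega
      obtain ⟨q, hq⟩ := hd
      exact ⟨((s i).val : ℤ) * q, by rw [← mul_sub, hq]; ring⟩
    have h3 : (4 : ℤ) ∣ W - 2 * P := by
      by_cases h0 : hammingWt c % 4 = 0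
      · -- doubly even: s·c even
        have hsc : ∑ i, c i * s i = 0 := hsdual c ⟨hcC, h0⟩
        have hP2 : (2 : ℤ) ∣ P := by
          have := dot_val_parity s c (by rw [← hsc]; exact Finset.sum_congr rfl fun i _ => mul_comm _ _)
          exact this
        have hW4 : W % 4 = 0 := by omega
        omega
      · -- singly even: s·c odd
        have he := heven c hcC
        have h2' : hammingWt c % 4 = 2 := by omega
        have hPodd : ¬ (2 : ℤ) ∣ P := by
          intro hP2
          have hsc0 : ∑ i, c i * s i = 0 := by
            have := dot_val_parity' s c hP2
            rw [← this]
            exact Finset.sum_congr rfl fun i _ => mul_comm _ _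
          have hsC : s ∈ dualCode 2 n (C : Set (Fin n → ZMod 2)) := by
            intro c' hc'
            by_cases h4 : hammingWt c' % 4 = 0
            · exact hsdual c' ⟨hc', h4⟩
            · have he' := heven c' hc'
              have hc'2 : hammingWt c' % 4 = 2 := by omega
              have hsum : c' + c ∈ (C : Set (Fin n → ZMod 2)) := C.add_mem hc' hcC
              have h40 : hammingWt (c' + c) % 4 = 0 :=
                wt_add_doubly_even c' c (horth c' hc' c hcC) hc'2 h2'
              have hz := hsdual (c' + c) ⟨hsum, h40⟩
              have hexp : ∑ i, (c' + c) i * s i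
                  = (∑ i, c' i * s i) + ∑ i, c i * s i := by
                rw [← Finset.sum_add_distrib]
                exact Finset.sum_congr rfl fun i _ => by
                  simp [Pi.add_apply, add_mul]
              rw [hexp, hsc0, add_zero] at hz
              exact hz
          have : s ∈ (C : Set (Fin n → ZMod 2)) := by rw [hsd]; exact hsC
          exact hsnot this
        omega
    obtain ⟨a, ha⟩ := h1
    obtain ⟨b, hb⟩ := h2
    obtain ⟨d, hd⟩ := h3
    exact ⟨a - b + d, by linarith⟩
  obtain ⟨k, hk⟩ := key
  refine ⟨k, ?_⟩
  have hs2 : Real.sqrt 2 * Real.sqrt 2 = 2 := Real.mul_self_sqrt (by norm_num)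
  have hs0 : Real.sqrt 2 ≠ 0 := by positivity
  have e1 : ∀ i, l i * l i = ((v i : ℝ)) ^ 2 / 2 := by
    intro i
    rw [hv i, div_mul_div_comm, hs2]
    ring
  have e2 : ∀ i, (Real.sqrt 2 * ((s i).val : ℝ)) * l i = ((s i).val : ℝ) * (v i : ℝ) := by
    intro i
    rw [hv i]
    field_simp
  simp only [e1, e2]
  have hkR : (∑ i, ((v i : ℝ)) ^ 2) - 2 * ∑ i, ((s i).val : ℝ) * (v i : ℝ) = 4 * (k : ℝ) := by
    have := congrArg (fun z : ℤ => (z : ℝ)) hk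
    push_cast at this
    convert this using 2
  rw [← Finset.sum_div]
  linarith
end

section
/- Let C ⊆ F_2^n be a singly-even self-dual code with shadow S(C), and let χ = √2·s for some fixed s ∈ S(C). Then the shadow of the lattice, S(Λ(C)) = Λ(C) + χ/2, equals the Construction A set of the code shadow: S(Λ(C)) = Λ(S(C)). -/
open scoped BigOperators

section Aux

variable {n : ℕ}

/-- The dot product of two binary words is the parity of the intersection of supports. -/
lemma sum_mul_eq_card_inter (c d : Fin n → ZMod 2) :
    ∑ i, c i * d i =
      ((Finset.univ.filter fun i => c i ≠ 0 ∧ d i ≠ 0).card : ZMod 2) := by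
  classical
  rw [← Finset.sum_filter_ne_zero (Finset.univ) (f := fun i => c i * d i)]
  have hset : (Finset.univ.filter fun i => c i * d i ≠ 0) =
      (Finset.univ.filter fun i => c i ≠ 0 ∧ d i ≠ 0) := by
    apply Finset.filter_congr
    intro i _
    have : ∀ a b : ZMod 2, (a * b ≠ 0 ↔ (a ≠ 0 ∧ b ≠ 0)) := by decide
    simpa using this (c i) (d i)
  rw [hset]
  have hone : ∀ i ∈ (Finset.univ.filter fun i => c i ≠ 0 ∧ d i ≠ 0), c i * d i = 1 := by
    intro i hi
    simp only [Finset.mem_filter] at hi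
    have : ∀ a b : ZMod 2, a ≠ 0 → b ≠ 0 → a * b = 1 := by decide
    exact this _ _ hi.2.1 hi.2.2
  rw [Finset.sum_congr rfl hone]
  simp

lemma wt_add_mod_four (c d : Fin n → ZMod 2) (h : ∑ i, c i * d i = 0) :
    hammingWt (c + d) % 4 = (hammingWt c + hammingWt d) % 4 := by
  classical
  set A := Finset.univ.filter fun i => c i ≠ 0 with hA
  set B := Finset.univ.filter fun i => d i ≠ 0 with hB
  have hsupp : (Finset.univ.filter fun i => (c + d) i ≠ 0) = (A ∪ B) \ (A ∩ B) := by
    ext i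
    have : ∀ a b : ZMod 2, (a + b ≠ 0 ↔ ((a ≠ 0 ∨ b ≠ 0) ∧ ¬(a ≠ 0 ∧ b ≠ 0))) := by decide
    simp only [hA, hB, Finset.mem_sdiff, Finset.mem_union, Finset.mem_inter,
      Finset.mem_filter, Finset.mem_univ, true_and, Pi.add_apply]
    simpa using this (c i) (d i)
  have hinter : A ∩ B = Finset.univ.filter fun i => c i ≠ 0 ∧ d i ≠ 0 := by
    ext i; simp [hA, hB, Finset.mem_filter, and_assoc]
  have hpar : 2 ∣ (A ∩ B).card := by
    rw [sum_mul_eq_card_inter, ← hinter] at h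
    exact (ZMod.natCast_eq_zero_iff _ 2).mp h
  obtain ⟨k, hk⟩ := hpar
  have hcard1 : (A ∪ B).card + (A ∩ B).card = A.card + B.card :=
    Finset.card_union_add_card_inter A B
  have hcard2 : ((A ∪ B) \ (A ∩ B)).card = (A ∪ B).card - (A ∩ B).card :=
    Finset.card_sdiff_of_subset (Finset.inter_subset_union)
  have hle : (A ∩ B).card ≤ (A ∪ B).card := Finset.card_le_card Finset.inter_subset_union
  have hwt : hammingWt (c + d) = (A ∪ B).card - (A ∩ B).card := by
    rw [hammingWt, hsupp, hcard2]
  rw [hwt, hammingWt, hammingWt, ← hA, ← hB]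
  omega

lemma wt_even_s10 {C : Submodule (ZMod 2) (Fin n → ZMod 2)}
    (hsd : (C : Set (Fin n → ZMod 2)) = dualCode 2 n (C : Set (Fin n → ZMod 2)))
    {c : Fin n → ZMod 2} (hc : c ∈ C) : 2 ∣ hammingWt c := by
  have hcd : c ∈ dualCode 2 n (C : Set (Fin n → ZMod 2)) := by rw [← hsd]; exact hc
  have h0 : ∑ i, c i * c i = 0 := hcd c hc
  rw [sum_mul_eq_card_inter] at h0
  have : (Finset.univ.filter fun i => c i ≠ 0 ∧ c i ≠ 0) =
      Finset.univ.filter fun i => c i ≠ 0 := by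
    ext i; simp
  rw [this] at h0
  exact (ZMod.natCast_eq_zero_iff _ 2).mp h0

/-- Key claim: for `u` in the shadow and `c ∈ C`, `⟨c,u⟩` is determined by the weight
class of `c`. -/
lemma inner_with_shadow {C : Submodule (ZMod 2) (Fin n → ZMod 2)}
    (hsd : (C : Set (Fin n → ZMod 2)) = dualCode 2 n (C : Set (Fin n → ZMod 2)))
    {u : Fin n → ZMod 2} (hu : u ∈ shadowCode n (C : Set (Fin n → ZMod 2)))
    {c : Fin n → ZMod 2} (hc : c ∈ C) :
    ∑ i, c i * u i = if hammingWt c % 4 = 2 then 1 else 0 := by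
  obtain ⟨hu1, hu2⟩ := hu
  have hwc := wt_even_s10 hsd hc
  by_cases h0 : hammingWt c % 4 = 0
  · rw [if_neg (by omega)]
    exact hu1 c ⟨hc, h0⟩
  · have h2 : hammingWt c % 4 = 2 := by omega
    rw [if_pos h2]
    by_contra hne
    have hzero : ∑ i, c i * u i = 0 := by
      have : ∀ a : ZMod 2, a ≠ 1 → a = 0 := by decide
      exact this _ hne
    -- then u ∈ C^⊥ = C, contradiction
    apply hu2
    rw [hsd]
    intro c' hc'
    have hwc' := wt_even_s10 hsd hc'
    by_cases h0' : hammingWt c' % 4 = 0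
    · exact hu1 c' ⟨hc', h0'⟩
    · have h2' : hammingWt c' % 4 = 2 := by omega
      have horth : ∑ i, c i * c' i = 0 := by
        have : c' ∈ dualCode 2 n (C : Set (Fin n → ZMod 2)) := by rw [← hsd]; exact hc'
        exact this c hc
      have hsum : c + c' ∈ C := C.add_mem hc hc'
      have hwt : hammingWt (c + c') % 4 = 0 := by
        rw [wt_add_mod_four c c' horth]; omega
      have := hu1 (c + c') ⟨hsum, hwt⟩
      have hsplit : ∑ i, (c + c') i * u i = ∑ i, c i * u i + ∑ i, c' i * u i := by
        rw [← Finset.sum_add_distrib]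
        exact Finset.sum_congr rfl fun i _ => by simp [add_mul]
      rw [hsplit, hzero, zero_add] at this
      exact this

/-- The shadow is the coset `C + s`. -/
lemma mem_shadow_iff {C : Submodule (ZMod 2) (Fin n → ZMod 2)}
    (hsd : (C : Set (Fin n → ZMod 2)) = dualCode 2 n (C : Set (Fin n → ZMod 2)))
    {s : Fin n → ZMod 2} (hs : s ∈ shadowCode n (C : Set (Fin n → ZMod 2)))
    (t : Fin n → ZMod 2) :
    t ∈ shadowCode n (C : Set (Fin n → ZMod 2)) ↔ t + s ∈ C := by
  constructor
  · intro ht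
    rw [show ((t + s ∈ C) ↔ (t + s ∈ (C : Set (Fin n → ZMod 2)))) from Iff.rfl, hsd]
    intro c hc
    have h1 := inner_with_shadow hsd ht hc
    have h2 := inner_with_shadow hsd hs hc
    have hsplit : ∑ i, c i * (t + s) i = ∑ i, c i * t i + ∑ i, c i * s i := by
      rw [← Finset.sum_add_distrib]
      exact Finset.sum_congr rfl fun i _ => by simp [mul_add]
    rw [hsplit, h1, h2]
    have : ∀ a : ZMod 2, a + a = 0 := by decide
    split <;> exact this _
  · intro hts
    constructor
    · intro d hd
      have hd0 : d ∈ C := hd.1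
      have hdd : (t + s) ∈ dualCode 2 n (C : Set (Fin n → ZMod 2)) := by rw [← hsd]; exact hts
      have h1 : ∑ i, d i * (t + s) i = 0 := hdd d hd0
      have h2 : ∑ i, d i * s i = 0 := hs.1 d hd
      have hsplit : ∑ i, d i * (t + s) i = ∑ i, d i * t i + ∑ i, d i * s i := by
        rw [← Finset.sum_add_distrib]
        exact Finset.sum_congr rfl fun i _ => by simp [mul_add]
      rw [hsplit, h2, add_zero] at h1
      exact h1
    · intro htC
      apply hs.2
      have : s = (t + s) + t := by
        funext i
        have : ∀ a b : ZMod 2, b = (a + b) + a := by decide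
        exact this (t i) (s i)
      rw [this]
      exact SetLike.mem_coe.mpr (C.add_mem hts htC)

end Aux

lemma real_split (a b : ℝ) : (a + b) / Real.sqrt 2 = a / Real.sqrt 2 + Real.sqrt 2 * b / 2 := by
  have hsq : Real.sqrt 2 * Real.sqrt 2 = 2 := Real.mul_self_sqrt (by norm_num)
  have hne : Real.sqrt 2 ≠ 0 := by positivity
  have hb : Real.sqrt 2 * b / 2 = b / Real.sqrt 2 := by
    rw [div_eq_div_iff (by norm_num) hne]
    linear_combination b * hsq
  rw [hb, add_div]

lemma cast_val_zmod2_s10 (a : ZMod 2) : ((a.val : ℤ) : ZMod 2) = a := by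
  have : ∀ a : ZMod 2, ((a.val : ℤ) : ZMod 2) = a := by decide
  exact this a

/-- For a singly-even self-dual binary code `C` with shadow `S(C)` and `χ = √2·s` for a
fixed `s ∈ S(C)`, the lattice shadow `S(Λ(C)) = Λ(C) + χ/2` equals the Construction A
set of the code shadow: `S(Λ(C)) = Λ(S(C))`. -/
theorem lattice_shadow_eq_code_shadow (n : ℕ) (C : Submodule (ZMod 2) (Fin n → ZMod 2))
    (hsd : (C : Set (Fin n → ZMod 2)) = dualCode 2 n (C : Set (Fin n → ZMod 2)))
    (hse : ∃ c ∈ C, hammingWt c % 4 = 2)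
    (s : Fin n → ZMod 2) (hs : s ∈ shadowCode n (C : Set (Fin n → ZMod 2))) :
    {x : Fin n → ℝ | ∃ l ∈ constructionA 2 n (C : Set (Fin n → ZMod 2)),
        x = l + (fun i => Real.sqrt 2 * ((s i).val : ℝ) / 2)} =
      constructionA 2 n (shadowCode n (C : Set (Fin n → ZMod 2))) := by
  have h2 : ((2 : ℕ) : ℝ) = 2 := by norm_num
  ext x
  simp only [Set.mem_setOf_eq, constructionA, h2]
  constructor
  · rintro ⟨l, ⟨v, hv, hvC⟩, rfl⟩
    refine ⟨fun i => v i + ((s i).val : ℤ), fun i => ?_, ?_⟩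
    · simp only [Pi.add_apply, hv i]
      push_cast
      rw [real_split]
    · have heq : (fun i => (((v i + ((s i).val : ℤ)) : ℤ) : ZMod 2)) =
          (fun i => ((v i : ZMod 2))) + s := by
        funext i
        have hval : ((s i).val : ZMod 2) = s i := by
          have : ∀ a : ZMod 2, ((a.val : ZMod 2)) = a := by decide
          exact this _
        push_cast
        simp [hval]
      rw [heq]
      rw [mem_shadow_iff hsd hs]
      have hss : (fun i => ((v i : ZMod 2))) + s + s = (fun i => ((v i : ZMod 2))) := by
        funext i
        have : ∀ a b : ZMod 2, a + b + b = a := by decide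
        exact this _ _
      rw [hss]
      exact hvC
  · rintro ⟨w, hw, hwS⟩
    refine ⟨fun i => ((w i - ((s i).val : ℤ) : ℤ) : ℝ) / Real.sqrt 2, ⟨fun i => w i - ((s i).val : ℤ), fun i => rfl, ?_⟩, ?_⟩
    · have heq : (fun i => (((w i - ((s i).val : ℤ)) : ℤ) : ZMod 2)) =
          (fun i => ((w i : ZMod 2))) + s := by
        funext i
        have hval : ((s i).val : ZMod 2) = s i := by
          have : ∀ a : ZMod 2, ((a.val : ZMod 2)) = a := by decide
          exact this _
        push_cast
        simp only [Pi.add_apply, hval]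
        have : ∀ a b : ZMod 2, a - b = a + b := by decide
        exact this _ _
      rw [heq]
      exact SetLike.mem_coe.mpr ((mem_shadow_iff hsd hs _).mp hwS)
    · funext i
      simp only [Pi.add_apply, hw i]
      have : (w i : ℝ) = ((w i - ((s i).val : ℤ) : ℤ) : ℝ) + ((s i).val : ℝ) := by push_cast; ring
      rw [this, real_split]
end

section
/- MacWilliams identity: for a linear code C ⊆ F_p^n with dual C^⊥, the complete weight enumerators satisfy W_{C^⊥}({x_a}) = (1/|C|) · W_C({x̃_a}), where x̃_a = Σ_{b ∈ F_p} e^{2πi ab/p} x_b. -/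
open scoped BigOperators

noncomputable def ech {p : ℕ} [NeZero p] (ζ : ℂ) (t : ZMod p) : ℂ := ζ ^ t.val

lemma ech_add {p : ℕ} [NeZero p] {ζ : ℂ} (hζ : ζ ^ p = 1) (s t : ZMod p) :
    ech ζ (s + t) = ech ζ s * ech ζ t := by
  unfold ech
  rw [ZMod.val_add, ← pow_add, ← pow_eq_pow_mod _ hζ]

lemma ech_sum {p : ℕ} [NeZero p] {ζ : ℂ} (hζ : ζ ^ p = 1) {ι : Type*} (s : Finset ι)
    (f : ι → ZMod p) : ech ζ (∑ i ∈ s, f i) = ∏ i ∈ s, ech ζ (f i) := by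
  classical
  induction s using Finset.induction with
  | empty => simp [ech]
  | insert _ _ h ih => rw [Finset.sum_insert h, Finset.prod_insert h, ech_add hζ, ih]

/-- `wt_a(c) = |{ i : c_i = a }|`. -/
def wtA {p n : ℕ} (a : ZMod p) (c : Fin n → ZMod p) : ℕ :=
  (Finset.univ.filter fun i => c i = a).card

open Classical in
/-- Complete weight enumerator `W_C({x_a}) = Σ_{c ∈ C} Π_a x_a^{wt_a(c)}`. -/
noncomputable def cwe (p n : ℕ) [NeZero p] (C : Set (Fin n → ZMod p)) (x : ZMod p → ℂ) : ℂ :=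
  ∑ c ∈ Finset.univ.filter (fun c => c ∈ C), ∏ a : ZMod p, x a ^ wtA a c

open Classical in
lemma char_sum {p n : ℕ} [Fact p.Prime] {ζ : ℂ} (hζ : IsPrimitiveRoot ζ p)
    (C : Submodule (ZMod p) (Fin n → ZMod p)) (v : Fin n → ZMod p) :
    ∑ c ∈ Finset.univ.filter (fun c => c ∈ (C : Set (Fin n → ZMod p))), ech ζ (∑ i, c i * v i) =
      if v ∈ dualCode p n (C : Set (Fin n → ZMod p)) then (Nat.card C : ℂ) else 0 := by
  classical
  have hζ1 : ζ ^ p = 1 := hζ.pow_eq_one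
  by_cases h : v ∈ dualCode p n (C : Set (Fin n → ZMod p))
  · rw [if_pos h]
    rw [Finset.sum_congr rfl (fun c hc => by
      rw [h c (Finset.mem_filter.mp hc).2]
      simp [ech] : ∀ c ∈ Finset.univ.filter (fun c => c ∈ (C : Set (Fin n → ZMod p))),
        ech ζ (∑ i, c i * v i) = 1), Finset.sum_const, nsmul_eq_mul, mul_one]
    simp [Nat.card_eq_fintype_card, Fintype.card_subtype]
  · rw [if_neg h]
    simp only [dualCode, Set.mem_setOf_eq, not_forall] at h
    obtain ⟨c0, hc0, h0⟩ := h
    set S := ∑ c ∈ Finset.univ.filter (fun c => c ∈ (C : Set (Fin n → ZMod p))),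
      ech ζ (∑ i, c i * v i) with hS
    have key : ech ζ (∑ i, c0 i * v i) * S = S := by
      rw [hS, Finset.mul_sum]
      apply Finset.sum_nbij' (i := fun c => c0 + c) (j := fun c => c - c0)
      · intro a ha
        simp only [Finset.mem_filter, Finset.mem_univ, true_and] at ha ⊢
        exact C.add_mem hc0 ha
      · intro a ha
        simp only [Finset.mem_filter, Finset.mem_univ, true_and] at ha ⊢
        exact C.sub_mem ha hc0
      · intro a _; abel
      · intro a _; abel
      · intro a _
        rw [← ech_add hζ1, ← Finset.sum_add_distrib]
        congr 1
        apply Finset.sum_congr rfl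
        intro i _; simp only [Pi.add_apply]; ring
    have hne : ech ζ (∑ i, c0 i * v i) ≠ 1 := by
      intro he
      apply h0
      have := (hζ.pow_eq_one_iff_dvd _).mp he
      have hlt : (∑ i, c0 i * v i).val < p := ZMod.val_lt _
      have : (∑ i, c0 i * v i).val = 0 := Nat.eq_zero_of_dvd_of_lt this hlt
      exact (ZMod.val_eq_zero _).mp this
    have : (ech ζ (∑ i, c0 i * v i) - 1) * S = 0 := by rw [sub_mul, key]; ring
    rcases mul_eq_zero.mp this with h' | h'
    · exact absurd (by linear_combination h') hne
    · exact h'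

lemma prod_wt {p n : ℕ} [NeZero p] (y : ZMod p → ℂ) (c : Fin n → ZMod p) :
    ∏ a : ZMod p, y a ^ wtA a c = ∏ i, y (c i) := by
  classical
  rw [← Finset.prod_fiberwise Finset.univ c (fun i => y (c i))]
  apply Finset.prod_congr rfl
  intro a _
  rw [Finset.prod_congr rfl (fun i hi => by
    rw [(Finset.mem_filter.mp hi).2] : ∀ i ∈ Finset.univ.filter (fun i => c i = a),
      y (c i) = y a), Finset.prod_const]
  rfl

/-- MacWilliams identity: `W_{C^⊥}({x_a}) = |C|⁻¹ · W_C({x̃_a})` with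
`x̃_a = Σ_b e^{2πi a b / p} x_b`. -/
theorem macWilliams_identity (p n : ℕ) [Fact p.Prime]
    (C : Submodule (ZMod p) (Fin n → ZMod p)) (x : ZMod p → ℂ) :
    cwe p n (dualCode p n (C : Set (Fin n → ZMod p))) x =
      (1 / (Nat.card C : ℂ)) *
        cwe p n (C : Set (Fin n → ZMod p))
          (fun a => ∑ b : ZMod p,
            Complex.exp (2 * Real.pi * Complex.I * ((a.val : ℂ) * (b.val : ℂ)) / p) * x b) := by
  classical
  have hp : p ≠ 0 := (Fact.out : p.Prime).ne_zero
  haveI : NeZero p := ⟨hp⟩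
  set ζ : ℂ := Complex.exp (2 * Real.pi * Complex.I / p) with hζdef
  have hprim : IsPrimitiveRoot ζ p := Complex.isPrimitiveRoot_exp p hp
  have hζ1 : ζ ^ p = 1 := hprim.pow_eq_one
  have hexp : ∀ a b : ZMod p,
      Complex.exp (2 * Real.pi * Complex.I * ((a.val : ℂ) * (b.val : ℂ)) / p) = ech ζ (a * b) := by
    intro a b
    have h1 : ech ζ (a * b) = ζ ^ (a.val * b.val) := by
      unfold ech
      rw [ZMod.val_mul, ← pow_eq_pow_mod _ hζ1]
    rw [h1, hζdef, ← Complex.exp_nat_mul]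
    congr 1
    push_cast
    ring
  have hN : (Nat.card C : ℂ) ≠ 0 := by
    have : 0 < Nat.card C := Nat.card_pos
    exact_mod_cast this.ne'
  -- expand RHS inner cwe
  have key : cwe p n (C : Set (Fin n → ZMod p))
      (fun a => ∑ b : ZMod p,
        Complex.exp (2 * Real.pi * Complex.I * ((a.val : ℂ) * (b.val : ℂ)) / p) * x b)
      = (Nat.card C : ℂ) * cwe p n (dualCode p n (C : Set (Fin n → ZMod p))) x := by
    unfold cwe
    calc ∑ c ∈ Finset.univ.filter (fun c => c ∈ (C : Set (Fin n → ZMod p))),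
          ∏ a : ZMod p, (∑ b : ZMod p,
            Complex.exp (2 * Real.pi * Complex.I * ((a.val : ℂ) * (b.val : ℂ)) / p) * x b) ^ wtA a c
        = ∑ c ∈ Finset.univ.filter (fun c => c ∈ (C : Set (Fin n → ZMod p))),
            ∏ i, ∑ b : ZMod p, ech ζ (c i * b) * x b := by
          apply Finset.sum_congr rfl
          intro c _
          rw [prod_wt]
          apply Finset.prod_congr rfl
          intro i _
          apply Finset.sum_congr rfl
          intro b _
          rw [hexp]
      _ = ∑ c ∈ Finset.univ.filter (fun c => c ∈ (C : Set (Fin n → ZMod p))),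
            ∑ v : Fin n → ZMod p, ech ζ (∑ i, c i * v i) * ∏ i, x (v i) := by
          apply Finset.sum_congr rfl
          intro c _
          rw [Fintype.prod_sum]
          apply Finset.sum_congr rfl
          intro v _
          rw [Finset.prod_mul_distrib, ech_sum hζ1]
      _ = ∑ v : Fin n → ZMod p,
            (∑ c ∈ Finset.univ.filter (fun c => c ∈ (C : Set (Fin n → ZMod p))),
              ech ζ (∑ i, c i * v i)) * ∏ i, x (v i) := by
          rw [Finset.sum_comm]
          apply Finset.sum_congr rfl
          intro v _
          rw [Finset.sum_mul]
      _ = ∑ v : Fin n → ZMod p,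
            (if v ∈ dualCode p n (C : Set (Fin n → ZMod p)) then (Nat.card C : ℂ) else 0)
              * ∏ i, x (v i) := by
          apply Finset.sum_congr rfl
          intro v _
          rw [char_sum hprim]
      _ = (Nat.card C : ℂ) * ∑ c ∈ Finset.univ.filter
            (fun c => c ∈ dualCode p n (C : Set (Fin n → ZMod p))), ∏ a : ZMod p, x a ^ wtA a c := by
          rw [Finset.sum_filter, Finset.mul_sum]
          apply Finset.sum_congr rfl
          intro v _
          by_cases h : v ∈ dualCode p n (C : Set (Fin n → ZMod p)) <;> simp [h, prod_wt]
  rw [key, ← mul_assoc, one_div, inv_mul_cancel₀ hN, one_mul]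
end

section
/- For an odd prime p and a self-dual code C ⊆ F_p^n, the minimum nonzero squared norm of vectors in the Construction A lattice Λ(C) equals min{ min_{c ∈ C, c ≠ 0} Norm(c)/p , p }, where Norm(c) = Σ_i min(c_i, p − c_i)^2. -/
open scoped BigOperators

/-- Euclidean norm of a codeword: `Norm(c) = Σ_i min(c_i, p - c_i)²`, using
representatives `c_i ∈ {0,…,p-1}`. -/
def eucNorm (p : ℕ) {n : ℕ} (c : Fin n → ZMod p) : ℕ :=
  ∑ i, (min (c i).val (p - (c i).val)) ^ 2

lemma sq_min_le (p : ℕ) [NeZero p] (w : ℤ) :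
    ((min ((w : ZMod p).val) (p - (w : ZMod p).val) : ℕ) : ℤ)^2 ≤ w^2 := by
  have hp : 0 < p := Nat.pos_of_ne_zero (NeZero.ne p)
  have hv : (((w : ZMod p).val : ℤ)) = w % p := ZMod.val_intCast w
  have hlt : (w : ZMod p).val < p := ZMod.val_lt _
  set a : ℤ := ((w : ZMod p).val : ℤ) with ha
  have h0 : 0 ≤ a := Int.natCast_nonneg _
  have h1 : a < p := by rw [ha]; exact_mod_cast hlt
  set m : ℕ := min ((w : ZMod p).val) (p - (w : ZMod p).val) with hmdef
  have hm1 : (m : ℤ) ≤ a := by exact_mod_cast Nat.cast_le.2 (min_le_left _ _)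
  have hm2 : (m : ℤ) ≤ (p : ℤ) - a := by
    have := min_le_right ((w : ZMod p).val) (p - (w : ZMod p).val)
    omega
  have hm0 : (0:ℤ) ≤ m := Int.natCast_nonneg _
  obtain ⟨k, hk⟩ : ∃ k : ℤ, w = a + p * k :=
    ⟨w / p, by have := Int.emod_add_mul_ediv w p; rw [hv]; linarith⟩
  rcases le_or_gt 0 k with hk0 | hk0
  · nlinarith [mul_nonneg (le_of_lt (by exact_mod_cast hp : (0:ℤ) < p)) hk0]
  · have : k ≤ -1 := by omega
    nlinarith [sq_nonneg (w + (m:ℤ)),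
      mul_nonneg (le_of_lt (by exact_mod_cast hp : (0:ℤ) < p)) (by linarith : (0:ℤ) ≤ -k - 1)]

/-- For an odd prime `p` and a self-dual code `C ⊆ 𝔽_p^n`, the minimum nonzero squared
norm of the Construction A lattice `Λ(C)` equals
`min( min_{c ∈ C, c ≠ 0} Norm(c)/p , p )`. -/
theorem constructionA_min_norm (p n : ℕ) [Fact p.Prime] (hp2 : p ≠ 2)
    (C : Submodule (ZMod p) (Fin n → ZMod p))
    (hsd : (C : Set (Fin n → ZMod p)) = dualCode p n (C : Set (Fin n → ZMod p))) :
    sInf {r : ℝ | ∃ x ∈ constructionA p n (C : Set (Fin n → ZMod p)),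
        x ≠ 0 ∧ r = ∑ i, x i ^ 2} =
      min (sInf {r : ℝ | ∃ c ∈ C, c ≠ 0 ∧ r = (eucNorm p c : ℝ) / p}) (p : ℝ) := by
  classical
  have hp : p.Prime := Fact.out
  have hpp : 0 < p := hp.pos
  have hpR : (0:ℝ) < p := by exact_mod_cast hpp
  have hsp : (0:ℝ) < Real.sqrt p := Real.sqrt_pos.2 hpR
  set S := {r : ℝ | ∃ x ∈ constructionA p n (C : Set (Fin n → ZMod p)),
      x ≠ 0 ∧ r = ∑ i, x i ^ 2} with hSdef
  set T := {r : ℝ | ∃ c ∈ C, c ≠ 0 ∧ r = (eucNorm p c : ℝ) / p} with hTdef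
  have memS : ∀ v : Fin n → ℤ, (fun i => ((v i : ZMod p))) ∈ C → v ≠ 0 →
      (∑ i, (v i : ℝ)^2)/p ∈ S := by
    intro v hv hv0
    refine ⟨fun i => (v i : ℝ) / Real.sqrt p, ⟨v, fun i => rfl, hv⟩, ?_, ?_⟩
    · intro h
      apply hv0
      funext i
      have h' := congrFun h i
      simp only [Pi.zero_apply, div_eq_zero_iff] at h'
      rcases h' with h' | h'
      · exact_mod_cast h'
      · exact absurd h' (ne_of_gt hsp)
    · rw [Finset.sum_div]
      refine Finset.sum_congr rfl fun i _ => ?_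
      rw [div_pow, Real.sq_sqrt hpR.le]
  have bddS : BddBelow S := ⟨0, by rintro r ⟨x, -, -, rfl⟩; positivity⟩
  have bddT : BddBelow T := ⟨0, by rintro r ⟨c, -, -, rfl⟩; positivity⟩
  rcases Nat.eq_zero_or_pos n with hn | hn
  · subst hn
    have hS : S = ∅ := by
      ext r
      simp only [hSdef, Set.mem_setOf_eq, Set.mem_empty_iff_false, iff_false, not_exists]
      rintro x ⟨-, hx0, -⟩
      exact hx0 (funext fun i => i.elim0)
    have hT : T = ∅ := by
      ext r
      simp only [hTdef, Set.mem_setOf_eq, Set.mem_empty_iff_false, iff_false, not_exists]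
      rintro c ⟨-, hc0, -⟩
      exact hc0 (funext fun i => i.elim0)
    rw [hS, hT, Real.sInf_empty, min_eq_left hpR.le]
  · set i0 : Fin n := ⟨0, hn⟩
    -- p ∈ S
    have hpS : (p:ℝ) ∈ S := by
      set v : Fin n → ℤ := fun i => if i = i0 then (p:ℤ) else 0 with hvdef
      have hmem : (fun i => ((v i : ZMod p))) ∈ C := by
        have hz : (fun i => ((v i : ZMod p))) = (0 : Fin n → ZMod p) := by
          funext i; by_cases h : i = i0 <;> simp [hvdef, h]
        rw [hz]; exact C.zero_mem
      have hne : v ≠ 0 := by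
        intro h
        have h0 := congrFun h i0
        simp [hvdef] at h0
        omega
      have h := memS v hmem hne
      have hsum : (∑ i, (v i : ℝ)^2) = (p:ℝ)^2 := by
        rw [Finset.sum_eq_single i0]
        · simp [hvdef]
        · intro b _ hb; simp [hvdef, hb]
        · simp
      rw [hsum] at h
      have hpe : (p:ℝ)^2/p = (p:ℝ) := by field_simp
      rwa [hpe] at h
    -- T nonempty
    have hTne : T.Nonempty := by
      obtain ⟨c, hc, hc0⟩ : ∃ c ∈ C, c ≠ (0 : Fin n → ZMod p) := by
        by_contra h
        push_neg at h
        have hone : (fun _ : Fin n => (1 : ZMod p)) ∈ (C : Set (Fin n → ZMod p)) := by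
          rw [hsd]
          intro c hc
          have hc' : c = 0 := h c hc
          simp [hc']
        have h1 := h _ hone
        have h2 := congrFun h1 i0
        simp only [Pi.zero_apply] at h2
        exact one_ne_zero h2
      exact ⟨_, c, hc, hc0, rfl⟩
    -- T ⊆ S
    have hTS : T ⊆ S := by
      rintro r ⟨c, hc, hc0, rfl⟩
      set v : Fin n → ℤ := fun i =>
        if (c i).val ≤ p - (c i).val then ((c i).val : ℤ) else ((c i).val : ℤ) - p with hvdef
      have hvc : (fun i => ((v i : ZMod p))) = c := by
        funext i
        by_cases h : (c i).val ≤ p - (c i).val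
        · simp [hvdef, h, ZMod.natCast_val, ZMod.cast_id]
        · simp only [hvdef, h, if_false]
          push_cast
          simp [ZMod.natCast_val, ZMod.cast_id, ZMod.natCast_self]
      have hv0 : v ≠ 0 := by
        intro h
        apply hc0
        rw [← hvc, h]
        funext i; simp
      have hmem := memS v (by rw [hvc]; exact hc) hv0
      have hval : ∀ i : Fin n, (c i).val < p := fun i => ZMod.val_lt _
      have hsum : (∑ i, (v i : ℝ)^2) = (eucNorm p c : ℝ) := by
        rw [eucNorm, Nat.cast_sum]
        refine Finset.sum_congr rfl fun i _ => ?_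
        by_cases h : (c i).val ≤ p - (c i).val
        · rw [hvdef, min_eq_left h]
          simp only [h, if_true]
          push_cast
          ring
        · rw [hvdef, min_eq_right (le_of_not_ge h)]
          simp only [h, if_false]
          have hle : (c i).val ≤ p := (hval i).le
          push_cast [hle]
          ring
      rw [hsum] at hmem
      exact hmem
    apply le_antisymm
    · apply le_min
      · exact csInf_le_csInf bddS hTne hTS
      · exact csInf_le bddS hpS
    · apply le_csInf ⟨_, hpS⟩
      rintro r ⟨x, ⟨v, hxv, hvC⟩, hx0, rfl⟩
      have hrv : ∑ i, x i ^ 2 = (∑ i, (v i : ℝ)^2)/p := by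
        rw [Finset.sum_div]
        refine Finset.sum_congr rfl fun i _ => ?_
        rw [hxv i, div_pow, Real.sq_sqrt hpR.le]
      by_cases hc : (fun i => ((v i : ZMod p))) = (0 : Fin n → ZMod p)
      · refine le_trans (min_le_right _ _) ?_
        have hv0 : v ≠ 0 := by
          intro h
          apply hx0
          funext i
          rw [hxv i, congrFun h i]
          simp
        obtain ⟨j, hj⟩ : ∃ j, v j ≠ 0 := by
          by_contra h; push_neg at h; exact hv0 (funext h)
        have hpd : (p:ℤ) ∣ v j := by
          have h1 := congrFun hc j
          simpa [ZMod.intCast_zmod_eq_zero_iff_dvd] using h1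
        have h1 : (p:ℝ)^2 ≤ (v j : ℝ)^2 := by
          obtain ⟨k, hk⟩ := hpd
          have hk0 : k ≠ 0 := by rintro rfl; simp at hk; exact hj hk
          have habs : (1:ℤ) ≤ |k| := Int.one_le_abs hk0
          have hk2 : (1:ℤ) ≤ k^2 := by nlinarith [sq_abs k]
          have h2 : (p:ℤ)^2 ≤ (v j)^2 := by
            rw [hk]
            nlinarith [mul_le_mul_of_nonneg_left hk2 (sq_nonneg (p:ℤ))]
          exact_mod_cast h2
        have h2 : (p:ℝ)^2 ≤ ∑ i, (v i : ℝ)^2 := by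
          refine le_trans h1 (Finset.single_le_sum (f := fun i => ((v i : ℝ))^2) (fun i _ => sq_nonneg _) (Finset.mem_univ j))
        rw [hrv, le_div_iff₀ hpR]
        nlinarith
      · refine le_trans (min_le_left _ _) ?_
        have hTle : sInf T ≤ (eucNorm p (fun i => ((v i : ZMod p))) : ℝ)/p :=
          csInf_le bddT ⟨_, hvC, hc, rfl⟩
        refine le_trans hTle ?_
        rw [hrv]
        have hkey : (eucNorm p (fun i => ((v i : ZMod p))) : ℝ) ≤ ∑ i, (v i : ℝ)^2 := by
          rw [eucNorm]
          push_cast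
          refine Finset.sum_le_sum fun i _ => ?_
          have hh := sq_min_le p (v i)
          exact_mod_cast hh
        gcongr
end
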